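/- Convergence of tilted expectations to the essential supremum: with the setup above, E_{x∼q_β}[e^{g(x)}] → e^M as β → ∞, where M = ess sup_p g. -/

import Mathlib

open MeasureTheory Real Filter

theorem stmt_8 {X : Type*} [MeasurableSpace X] (p : Measure X) [IsProbabilityMeasure p]
    (g : X → ℝ) (hg : Measurable g) (hbdd : ∃ C : ℝ, ∀ x, |g x| ≤ C)
    (M : ℝ) (hM : M = essSup g p)
    (Z : ℝ → ℝ) (hZ : ∀ β, Z β = ∫ x, exp (β * g x) ∂p) :
    Tendsto
      (fun β : ℝ =>
        ∫ x, exp (g x) ∂(p.withDensity (fun x => ENNReal.ofReal (exp (β * g x) / Z β))))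
      atTop (nhds (exp M)) := by
  obtain ⟨C₀, hC₀⟩ := hbdd
  set C := |C₀| with hCdef
  have hC : ∀ x, |g x| ≤ C := fun x => (hC₀ x).trans (le_abs_self _)
  have hCnn : 0 ≤ C := abs_nonneg _
  -- integrability
  have hint : ∀ β : ℝ, Integrable (fun x => exp (β * g x)) p := by
    intro β
    refine (integrable_const (exp (|β| * C))).mono'
      ((hg.const_mul β).exp.aestronglyMeasurable) ?_
    filter_upwards with x
    rw [norm_of_nonneg (exp_pos _).le]
    refine exp_le_exp.2 ?_
    calc β * g x ≤ |β * g x| := le_abs_self _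
    _ = |β| * |g x| := abs_mul _ _
    _ ≤ |β| * C := mul_le_mul_of_nonneg_left (hC x) (abs_nonneg β)
  -- positivity of Z
  have hZpos : ∀ β : ℝ, 0 < Z β := by
    intro β
    rw [hZ]
    have h1 : ∀ x, exp (-(|β| * C)) ≤ exp (β * g x) := by
      intro x
      refine exp_le_exp.2 ?_
      have h2 : |β * g x| ≤ |β| * C := by
        rw [abs_mul]; exact mul_le_mul_of_nonneg_left (hC x) (abs_nonneg β)
      linarith [(abs_le.1 h2).1]
    calc (0:ℝ) < exp (-(|β| * C)) := exp_pos _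
    _ = ∫ _, exp (-(|β| * C)) ∂p := by simp
    _ ≤ ∫ x, exp (β * g x) ∂p := integral_mono (integrable_const _) (hint β)
        (fun x => h1 x)
  -- g ≤ M a.e.
  have hbound : IsBoundedUnder (· ≤ ·) (ae p) g :=
    isBoundedUnder_of ⟨C, fun x => (abs_le.1 (hC x)).2⟩
  have hgM : ∀ᵐ x ∂p, g x ≤ M := by
    rw [hM]; exact ae_le_essSup hbound
  -- sets {g ≥ M - δ} have positive measure
  have hpos : ∀ δ : ℝ, 0 < δ → 0 < (p {x | M - δ ≤ g x}).toReal := by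
    intro δ hδ
    refine ENNReal.toReal_pos ?_ (measure_ne_top p _)
    intro h0
    have hae : ∀ᵐ x ∂p, ¬ (M - δ ≤ g x) := by
      rw [ae_iff]; simpa using h0
    have hne : (ae p).NeBot := ae_neBot.2 (IsProbabilityMeasure.ne_zero (μ := p))
    have hcob : IsCoboundedUnder (· ≤ ·) (ae p) g :=
      (isBoundedUnder_of ⟨-C, fun x => (abs_le.1 (hC x)).1⟩ :
        IsBoundedUnder (· ≥ ·) (ae p) g).isCoboundedUnder_le
    have hle : essSup g p ≤ M - δ :=
      limsup_le_of_le hcob (hae.mono fun x hx => (not_le.1 hx).le)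
    rw [← hM] at hle; linarith
  -- rewrite the tilted integral
  set R : ℝ → ℝ := fun β => (∫ x, exp ((β + 1) * g x) ∂p) / Z β with hRdef
  have hrw : ∀ β : ℝ,
      ∫ x, exp (g x) ∂(p.withDensity (fun x => ENNReal.ofReal (exp (β * g x) / Z β)))
        = R β := by
    intro β
    have hm : Measurable fun x => (exp (β * g x) / Z β).toNNReal :=
      ((hg.const_mul β).exp.div_const _).real_toNNReal
    have : (fun x => ENNReal.ofReal (exp (β * g x) / Z β))
        = fun x => ((fun x => (exp (β * g x) / Z β).toNNReal) x : ENNReal) := rfl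
    rw [this, integral_withDensity_eq_integral_smul hm]
    show _ = (∫ x, exp ((β + 1) * g x) ∂p) / Z β
    rw [← integral_div]
    congr 1
    ext x
    rw [NNReal.smul_def, smul_eq_mul,
      Real.coe_toNNReal _ (div_nonneg (exp_pos _).le (hZpos β).le),
      div_mul_eq_mul_div, ← exp_add]
    ring_nf
  -- upper bound
  have hub : ∀ β : ℝ, R β ≤ exp M := by
    intro β
    show _ ≤ exp M
    show (∫ x, exp ((β + 1) * g x) ∂p) / Z β ≤ exp M
    rw [div_le_iff₀ (hZpos β), hZ]
    calc ∫ x, exp ((β + 1) * g x) ∂p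
        ≤ ∫ x, exp M * exp (β * g x) ∂p := by
          refine integral_mono_ae (hint (β + 1)) ((hint β).const_mul _) ?_
          filter_upwards [hgM] with x hx
          rw [← exp_add]
          refine exp_le_exp.2 ?_
          nlinarith
    _ = exp M * ∫ x, exp (β * g x) ∂p := integral_const_mul _ _
  -- lower bound
  have hlb : ∀ δ : ℝ, 0 < δ → ∀ β : ℝ, 0 ≤ β →
      exp (M - δ) * (1 - exp (-(β * (δ / 2))) / (p {x | M - δ / 2 ≤ g x}).toReal)
        ≤ R β := by
    intro δ hδ β hβ
    set A := {x | M - δ ≤ g x} with hA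
    have hAm : MeasurableSet A := measurableSet_le measurable_const hg
    set c := (p {x | M - δ / 2 ≤ g x}).toReal with hc0
    have hc : 0 < c := hpos _ (by linarith)
    have hBm : MeasurableSet {x | M - δ / 2 ≤ g x} := measurableSet_le measurable_const hg
    -- Z β ≥ exp (β * (M - δ/2)) * c
    have h4 : exp (β * (M - δ / 2)) * c ≤ Z β := by
      rw [hZ]
      calc exp (β * (M - δ / 2)) * c
          = ∫ _ in {x | M - δ / 2 ≤ g x}, exp (β * (M - δ / 2)) ∂p := by
            rw [setIntegral_const, smul_eq_mul, mul_comm]; rfl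
      _ ≤ ∫ x in {x | M - δ / 2 ≤ g x}, exp (β * g x) ∂p := by
            refine setIntegral_mono_on
              (integrableOn_const (measure_ne_top p _))
              ((hint β).integrableOn) hBm ?_
            intro x hx
            exact exp_le_exp.2 (mul_le_mul_of_nonneg_left hx hβ)
      _ ≤ ∫ x, exp (β * g x) ∂p :=
            setIntegral_le_integral (hint β)
              (Eventually.of_forall fun x => (exp_pos _).le)
    -- tail bound
    have h1 : ∫ x in Aᶜ, exp (β * g x) ∂p ≤ exp (β * (M - δ)) := by
      calc ∫ x in Aᶜ, exp (β * g x) ∂p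
          ≤ ∫ _ in Aᶜ, exp (β * (M - δ)) ∂p := by
            refine setIntegral_mono_on ((hint β).integrableOn)
              (integrableOn_const (measure_ne_top p _)) hAm.compl ?_
            intro x hx
            have : ¬ (M - δ ≤ g x) := hx
            exact exp_le_exp.2 (mul_le_mul_of_nonneg_left (not_le.1 this).le hβ)
      _ = (p Aᶜ).toReal * exp (β * (M - δ)) := by
            rw [setIntegral_const, smul_eq_mul]; rfl
      _ ≤ 1 * exp (β * (M - δ)) := by
            have h : (p Aᶜ).toReal ≤ 1 := by
              have := ENNReal.toReal_mono (by simp) (prob_le_one (μ := p) (s := Aᶜ))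
              simpa using this
            exact mul_le_mul_of_nonneg_right h (exp_pos _).le
      _ = exp (β * (M - δ)) := one_mul _
    have hsplit : ∫ x in A, exp (β * g x) ∂p + ∫ x in Aᶜ, exp (β * g x) ∂p = Z β := by
      rw [hZ]; exact integral_add_compl hAm (hint β)
    have hA2 : Z β - exp (β * (M - δ)) ≤ ∫ x in A, exp (β * g x) ∂p := by linarith
    have h3 : exp (M - δ) * (Z β - exp (β * (M - δ))) ≤ ∫ x, exp ((β + 1) * g x) ∂p := by
      calc exp (M - δ) * (Z β - exp (β * (M - δ)))
          ≤ exp (M - δ) * ∫ x in A, exp (β * g x) ∂p :=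
            mul_le_mul_of_nonneg_left hA2 (exp_pos _).le
      _ = ∫ x in A, exp (M - δ) * exp (β * g x) ∂p := (integral_const_mul _ _).symm
      _ ≤ ∫ x in A, exp ((β + 1) * g x) ∂p := by
            refine setIntegral_mono_on (((hint β).const_mul _).integrableOn)
              ((hint (β + 1)).integrableOn) hAm ?_
            intro x hx
            have hx' : M - δ ≤ g x := hx
            rw [← exp_add]
            refine exp_le_exp.2 ?_
            nlinarith
      _ ≤ ∫ x, exp ((β + 1) * g x) ∂p :=
            setIntegral_le_integral (hint (β + 1))
              (Eventually.of_forall fun x => (exp_pos _).le)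
    have key : exp (β * (M - δ)) / Z β ≤ exp (-(β * (δ / 2))) / c := by
      have h5 : exp (β * (M - δ)) / Z β
          ≤ exp (β * (M - δ)) / (exp (β * (M - δ / 2)) * c) := by
        apply div_le_div_of_nonneg_left (exp_pos _).le (by positivity) h4
      have heq : exp (β * (M - δ)) / (exp (β * (M - δ / 2)) * c)
          = exp (-(β * (δ / 2))) / c := by
        rw [show β * (M - δ) = β * (M - δ / 2) + -(β * (δ / 2)) by ring, exp_add]
        exact mul_div_mul_left _ _ (exp_ne_zero _)
      linarith [heq ▸ h5]
    have hR1 : exp (M - δ) * (1 - exp (β * (M - δ)) / Z β) ≤ R β := by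
      show _ ≤ (∫ x, exp ((β + 1) * g x) ∂p) / Z β
      have := (div_le_div_iff_of_pos_right (hZpos β)).2 h3
      calc exp (M - δ) * (1 - exp (β * (M - δ)) / Z β)
          = exp (M - δ) * (Z β - exp (β * (M - δ))) / Z β := by
            rw [mul_div_assoc, sub_div, div_self (hZpos β).ne']
      _ ≤ (∫ x, exp ((β + 1) * g x) ∂p) / Z β := this
    calc exp (M - δ) * (1 - exp (-(β * (δ / 2))) / c)
        ≤ exp (M - δ) * (1 - exp (β * (M - δ)) / Z β) :=
          mul_le_mul_of_nonneg_left (by linarith) (exp_pos _).le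
    _ ≤ R β := hR1
  -- conclude
  have hfun : (fun β : ℝ =>
      ∫ x, exp (g x) ∂(p.withDensity (fun x => ENNReal.ofReal (exp (β * g x) / Z β))))
      = R := funext hrw
  rw [hfun, Metric.tendsto_nhds]
  intro ε hε
  set δ : ℝ := min (ε / (2 * exp M)) 1 with hδdef
  have hδpos : 0 < δ := lt_min (by positivity) one_pos
  have hδ2 : exp M - exp (M - δ) ≤ ε / 2 := by
    have h1 : exp M * (1 - δ) ≤ exp (M - δ) := by
      rw [show M - δ = M + -δ by ring, exp_add]
      have : 1 - δ ≤ exp (-δ) := by linarith [add_one_le_exp (-δ)]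
      exact mul_le_mul_of_nonneg_left this (exp_pos _).le
    have h2 : δ ≤ ε / (2 * exp M) := min_le_left _ _
    have h3 : exp M * δ ≤ ε / 2 := by
      have h4 := mul_le_mul_of_nonneg_left h2 (exp_pos M).le
      have h5 : exp M * (ε / (2 * exp M)) = ε / 2 := by
        field_simp
      linarith
    nlinarith
  set c := (p {x | M - δ / 2 ≤ g x}).toReal with hcdef
  have hc : 0 < c := hpos _ (by linarith)
  have htend : Tendsto (fun β : ℝ => exp (-(β * (δ / 2)))) atTop (nhds 0) := by
    refine Real.tendsto_exp_atBot.comp ?_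
    have : Tendsto (fun β : ℝ => β * (δ / 2)) atTop atTop :=
      Tendsto.atTop_mul_const (by linarith) tendsto_id
    exact tendsto_neg_atBot_iff.2 this
  have hb : (0:ℝ) < ε / (2 * exp M) * c := by positivity
  filter_upwards [htend.eventually_lt_const hb, eventually_ge_atTop (0:ℝ)]
    with β h1 h2
  have hl := hlb δ hδpos β h2
  have hu := hub β
  set t := exp (-(β * (δ / 2))) with htdef
  have ht : 0 ≤ t / c := div_nonneg (exp_pos _).le hc.le
  have h6 : t / c < ε / (2 * exp M) := (div_lt_iff₀ hc).2 h1
  have h7 : exp M * (t / c) < ε / 2 := by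
    have := mul_lt_mul_of_pos_left h6 (exp_pos M)
    have heq : exp M * (ε / (2 * exp M)) = ε / 2 := by
      field_simp
    linarith [heq ▸ this]
  have e1 : exp (M - δ) ≤ exp M := exp_le_exp.2 (by linarith)
  have h8 : exp (M - δ) * (t / c) ≤ exp M * (t / c) :=
    mul_le_mul_of_nonneg_right e1 ht
  have hl' : exp (M - δ) - exp (M - δ) * (t / c) ≤ R β := by
    have : exp (M - δ) * (1 - t / c) = exp (M - δ) - exp (M - δ) * (t / c) := by ring
    linarith [this ▸ hl]
  rw [Real.dist_eq, abs_lt]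
  constructor <;> linarith
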